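/- Let L be a number field with Galois closure L̃ and Galois group G = Gal(L̃/ℚ). Let π ∈ L be a Weil q-number, k the order of the group of roots of unity of L̃, and F = ℚ(π^k). Then the stabilizer in G of the vector of p-adic valuations (v(π))_{v | p, v valuation of L̃} equals the subgroup Gal(L̃/F) fixing F pointwise. -/

import Mathlib

open NumberField IsDedekindDomain

/-- The exponent of the prime `w` in the ideal generated by `x`. -/
noncomputable def padicOrd {M : Type*} [Field M] [NumberField M]
    (w : HeightOneSpectrum (𝓞 M)) (x : 𝓞 M) : ℕ := by
  classical
  exact (Associates.mk w.asIdeal).count (Associates.mk (Ideal.span {x} : Ideal (𝓞 M))).factors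

/-- The `w`-adic valuation of `x`, normalized so that the valuation of `p` is `1`. -/
noncomputable def normVal {M : Type*} [Field M] [NumberField M]
    (w : HeightOneSpectrum (𝓞 M)) (p : ℕ) (x : 𝓞 M) : ℚ :=
  (padicOrd w x : ℚ) / (padicOrd w (p : 𝓞 M) : ℚ)

namespace Stmt4Aux

variable {M : Type*} [Field M] [NumberField M]

lemma mk_span_ne_zero {x : 𝓞 M} (hx : x ≠ 0) :
    Associates.mk (Ideal.span {x} : Ideal (𝓞 M)) ≠ 0 := by
  rw [Associates.mk_ne_zero, Ne, Submodule.zero_eq_bot, Ideal.span_singleton_eq_bot]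
  exact hx

lemma padicOrd_pow (w : HeightOneSpectrum (𝓞 M)) {x : 𝓞 M} (hx : x ≠ 0) (k : ℕ) :
    padicOrd w (x ^ k) = k * padicOrd w x := by
  classical
  unfold padicOrd
  rw [← Ideal.span_singleton_pow, Associates.mk_pow]
  exact Associates.count_pow (mk_span_ne_zero hx) w.associates_irreducible k

lemma padicOrd_eq_zero_of_dvd (w : HeightOneSpectrum (𝓞 M)) {x y : 𝓞 M} (hx : x ≠ 0)
    (hdvd : x ∣ y) (hy : y ∉ w.asIdeal) : padicOrd w x = 0 := by
  classical
  by_contra h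
  have h1 : w.asIdeal ∣ Ideal.span {x} :=
    (Associates.count_ne_zero_iff_dvd
      (by rw [Ne, Submodule.zero_eq_bot, Ideal.span_singleton_eq_bot]; exact hx)
      w.irreducible).mp h
  have hxw : x ∈ w.asIdeal := Ideal.le_of_dvd h1 (Ideal.mem_span_singleton_self x)
  obtain ⟨c, rfl⟩ := hdvd
  exact hy (Ideal.mul_mem_right c _ hxw)

lemma padicOrd_ne_zero (w : HeightOneSpectrum (𝓞 M)) {x : 𝓞 M} (hx : x ≠ 0)
    (hmem : x ∈ w.asIdeal) : padicOrd w x ≠ 0 := by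
  classical
  refine (Associates.count_ne_zero_iff_dvd ?_ w.irreducible).mpr ?_
  · rw [Ne, Submodule.zero_eq_bot, Ideal.span_singleton_eq_bot]; exact hx
  · exact Ideal.dvd_iff_le.mpr ((Ideal.span_singleton_le_iff_mem _).mpr hmem)

lemma span_eq_of_padicOrd_eq {x y : 𝓞 M} (hx : x ≠ 0) (hy : y ≠ 0)
    (h : ∀ w : HeightOneSpectrum (𝓞 M), padicOrd w x = padicOrd w y) :
    Ideal.span ({x} : Set (𝓞 M)) = Ideal.span {y} := by
  classical
  have key : Associates.mk (Ideal.span ({x} : Set (𝓞 M))) = Associates.mk (Ideal.span {y}) := by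
    apply Associates.eq_of_eq_counts (mk_span_ne_zero hx) (mk_span_ne_zero hy)
    intro P hP
    obtain ⟨J, rfl⟩ := Associates.mk_surjective P
    have hJirr : Irreducible J := Associates.irreducible_mk.mp hP
    have hJprime : Prime J := UniqueFactorizationMonoid.irreducible_iff_prime.mp hJirr
    exact h ⟨J, Ideal.isPrime_of_prime hJprime, hJprime.ne_zero⟩
  exact associated_iff_eq.mp (Associates.mk_eq_mk_iff_associated.mp key)

end Stmt4Aux

open Stmt4Aux in
theorem stmt4 (p n q : ℕ) (hp : p.Prime) (hn : 0 < n) (hq : q = p ^ n)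
    (L Lt : Type*) [Field L] [NumberField L] [Field Lt] [NumberField Lt]
    [Algebra L Lt] [IsScalarTower ℚ L Lt] [IsGalois ℚ Lt]
    (hLt : IntermediateField.normalClosure ℚ L Lt = ⊤)
    (π : 𝓞 L)
    (habs : ∀ σ : L →+* ℂ, ‖σ (π : L)‖ = Real.sqrt q) :
    ∀ σ : Lt ≃ₐ[ℚ] Lt,
      (∀ w : HeightOneSpectrum (𝓞 Lt), (p : 𝓞 Lt) ∈ w.asIdeal →
        normVal w p (RingOfIntegers.mapRingHom σ.symm
          (algebraMap (𝓞 L) (𝓞 Lt) π)) =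
        normVal w p (algebraMap (𝓞 L) (𝓞 Lt) π)) ↔
      σ ∈ (IntermediateField.adjoin ℚ
        ({(algebraMap L Lt (π : L)) ^ (NumberField.Units.torsionOrder Lt : ℕ)} :
          Set Lt)).fixingSubgroup := by
  intro σ
  classical
  set k : ℕ := (NumberField.Units.torsionOrder Lt : ℕ) with hkdef
  have hk0 : 0 < k := NumberField.Units.torsionOrder_pos Lt
  set π' : 𝓞 Lt := algebraMap (𝓞 L) (𝓞 Lt) π with hπ'def
  set τπ : 𝓞 Lt := RingOfIntegers.mapRingHom σ.symm π' with hτdef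
  have hcoe : (π' : Lt) = algebraMap L Lt (π : L) := rfl
  have hτcoe : (τπ : Lt) = σ.symm (π' : Lt) := rfl
  have hq0 : (0:ℝ) < (q:ℝ) := by
    rw [hq]; exact_mod_cast pow_pos hp.pos n
  have hsq0 : Real.sqrt (q:ℝ) ≠ 0 := by
    rw [Real.sqrt_ne_zero']; exact hq0
  have habs' : ∀ φ : Lt →+* ℂ, ‖φ ((π' : Lt))‖ = Real.sqrt q := fun φ => by
    rw [hcoe]; exact habs (φ.comp (algebraMap L Lt))
  have habsτ : ∀ φ : Lt →+* ℂ, ‖φ ((τπ : Lt))‖ = Real.sqrt q := fun φ => by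
    rw [hτcoe, hcoe]
    exact habs ((φ.comp σ.symm.toAlgHom.toRingHom).comp (algebraMap L Lt))
  have hπ'ne : π' ≠ 0 := by
    intro h
    have hne : Nonempty (Lt →+* ℂ) := by
      rw [← Fintype.card_pos_iff, NumberField.Embeddings.card Lt ℂ]
      exact Module.finrank_pos
    obtain ⟨φ⟩ := hne
    have := habs' φ
    rw [h] at this
    simp only [map_zero, norm_zero] at this
    exact hsq0 this.symm
  have hτne : τπ ≠ 0 := fun h => hπ'ne <| by
    apply RingOfIntegers.ext
    apply σ.symm.injective
    rw [← hτcoe, h]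
    simp
  -- the norm of π' is, up to sign, a power of p
  set D : ℕ := Module.finrank ℚ Lt with hD
  have hcard : Fintype.card (Lt →ₐ[ℚ] ℂ) = D := by
    rw [hD, ← NumberField.Embeddings.card Lt ℂ]
    exact (Fintype.card_congr (RingHom.equivRatAlgHom Lt ℂ)).symm
  have hnormabs : ‖(algebraMap ℚ ℂ) (Algebra.norm ℚ ((π' : Lt)))‖ = Real.sqrt q ^ D := by
    rw [Algebra.norm_eq_prod_embeddings, norm_prod]
    rw [Finset.prod_congr rfl (fun φ _ => habs' φ.toRingHom)]
    rw [Finset.prod_const, Finset.card_univ, hcard]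
  have hnorm_sq : (Algebra.norm ℚ ((π' : Lt))) ^ 2 = (q:ℚ) ^ D := by
    have h1 : ‖(algebraMap ℚ ℂ) (Algebra.norm ℚ ((π' : Lt)))‖ ^ 2 = (q:ℝ) ^ D := by
      rw [hnormabs, ← pow_mul, mul_comm, pow_mul, Real.sq_sqrt hq0.le]
    rw [eq_ratCast, Complex.norm_ratCast, sq_abs] at h1
    exact_mod_cast h1
  set N : 𝓞 ℚ := RingOfIntegers.norm ℚ π' with hN
  have hNdvd : π' ∣ algebraMap (𝓞 ℚ) (𝓞 Lt) N := RingOfIntegers.dvd_norm ℚ π'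
  have hNsq : N ^ 2 = ((q : 𝓞 ℚ)) ^ D := by
    apply RingOfIntegers.ext
    push_cast
    rw [hN]
    exact hnorm_sq
  have hdvdP : π' ∣ (p : 𝓞 Lt) ^ (n * D) := by
    refine hNdvd.trans (Dvd.dvd.trans (map_dvd _ (dvd_pow_self N two_ne_zero)) ?_)
    rw [hNsq, map_pow, map_natCast, hq]
    rw [Nat.cast_pow, ← pow_mul]
  have hτdvdP : τπ ∣ (p : 𝓞 Lt) ^ (n * D) := by
    have h1 := map_dvd (RingOfIntegers.mapRingHom (σ.symm : Lt →+* Lt)) hdvdP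
    rwa [map_pow, map_natCast] at h1
  have hpne : (p : 𝓞 Lt) ≠ 0 := Nat.cast_ne_zero.mpr hp.pos.ne'
  set x0 : Lt := (algebraMap L Lt (π : L)) ^ k with hx0def
  constructor
  · intro hval
    have hcounts : ∀ w : HeightOneSpectrum (𝓞 Lt), padicOrd w τπ = padicOrd w π' := by
      intro w
      by_cases hpw : (p : 𝓞 Lt) ∈ w.asIdeal
      · have h1 := hval w hpw
        unfold normVal at h1
        have he : ((padicOrd w ((p : 𝓞 Lt)) : ℚ)) ≠ 0 := by
          exact_mod_cast padicOrd_ne_zero w hpne hpw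
        rw [div_eq_div_iff he he] at h1
        exact_mod_cast mul_right_cancel₀ he h1
      · have hppow : (p : 𝓞 Lt) ^ (n * D) ∉ w.asIdeal := fun hmem =>
          hpw (w.isPrime.mem_of_pow_mem _ hmem)
        rw [padicOrd_eq_zero_of_dvd w hτne hτdvdP hppow,
          padicOrd_eq_zero_of_dvd w hπ'ne hdvdP hppow]
    have hspan := span_eq_of_padicOrd_eq hτne hπ'ne hcounts
    obtain ⟨u, hu⟩ := Ideal.span_singleton_eq_span_singleton.mp hspan
    -- hu : τπ * u = π'
    have hu1 : ∀ φ : Lt →+* ℂ, ‖φ (((u : 𝓞 Lt) : Lt))‖ = 1 := by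
      intro φ
      have h2 : (((τπ * (u : 𝓞 Lt) : 𝓞 Lt)) : Lt) = ((π' : Lt)) := by
        rw [hu]
      have h3 : ‖φ ((τπ : Lt))‖ * ‖φ (((u : 𝓞 Lt) : Lt))‖ = Real.sqrt q := by
        rw [← norm_mul, ← map_mul]
        rw [show ((τπ : Lt)) * (((u : 𝓞 Lt) : Lt)) = ((π' : Lt)) by
          rw [← h2]; push_cast; ring]
        exact habs' φ
      rw [habsτ φ] at h3
      field_simp at h3
      exact h3
    have hint : IsIntegral ℤ (((u : 𝓞 Lt) : Lt)) := RingOfIntegers.isIntegral_coe _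
    obtain ⟨m, hm0, hm⟩ := NumberField.Embeddings.pow_eq_one_of_norm_eq_one Lt ℂ hint hu1
    have hufin : u ∈ NumberField.Units.torsion Lt := by
      rw [NumberField.Units.torsion, CommGroup.mem_torsion, isOfFinOrder_iff_pow_eq_one]
      refine ⟨m, hm0, ?_⟩
      apply Units.ext
      apply RingOfIntegers.ext
      push_cast
      exact hm
    have huk : ((u : 𝓞 Lt)) ^ k = 1 := by
      have h4 : (⟨u, hufin⟩ : NumberField.Units.torsion Lt) ^ k = 1 := by
        have : k = Nat.card (NumberField.Units.torsion Lt) := rfl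
        rw [this]
        exact pow_card_eq_one'
      have h5 : u ^ k = 1 := by
        have := congrArg (Subtype.val) h4
        simpa using this
      have := congrArg (Units.val) h5
      simpa using this
    have hfix : τπ ^ k = π' ^ k := by
      rw [← hu, mul_pow, huk, mul_one]
    have h6 : (algebraMap (𝓞 Lt) Lt τπ) ^ k = (algebraMap (𝓞 Lt) Lt π') ^ k := by
      have h9 := congrArg (algebraMap (𝓞 Lt) Lt) hfix
      rwa [map_pow, map_pow] at h9
    have hsymm : σ.symm x0 = x0 := by
      rw [hx0def]
      calc σ.symm ((algebraMap L Lt (π : L)) ^ k)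
          = σ.symm ((algebraMap (𝓞 Lt) Lt π') ^ k) := rfl
        _ = (σ.symm (algebraMap (𝓞 Lt) Lt π')) ^ k := map_pow σ.symm _ k
        _ = (algebraMap (𝓞 Lt) Lt τπ) ^ k := rfl
        _ = (algebraMap (𝓞 Lt) Lt π') ^ k := h6
        _ = (algebraMap L Lt (π : L)) ^ k := rfl
    have hσx0 : σ x0 = x0 := by
      have h8 := congrArg σ hsymm
      rw [AlgEquiv.apply_symm_apply] at h8
      exact h8.symm
    rw [IntermediateField.mem_fixingSubgroup_iff]
    intro y hy
    induction hy using IntermediateField.adjoin_induction with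
    | mem z hz =>
        rw [Set.mem_singleton_iff] at hz
        rw [hz]
        exact hσx0
    | algebraMap z => exact σ.commutes z
    | add a b _ _ ha hb => rw [map_add, ha, hb]
    | inv a _ ha => rw [map_inv₀, ha]
    | mul a b _ _ ha hb => rw [map_mul, ha, hb]
  · intro hσ w hpw
    have hx0mem : x0 ∈ IntermediateField.adjoin ℚ ({x0} : Set Lt) :=
      IntermediateField.subset_adjoin ℚ _ rfl
    have hσx0 : σ x0 = x0 :=
      (IntermediateField.mem_fixingSubgroup_iff _ σ).mp hσ x0 hx0mem
    have hsymm : σ.symm x0 = x0 := by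
      apply σ.injective
      rw [AlgEquiv.apply_symm_apply, hσx0]
    have hkey : τπ ^ k = π' ^ k := by
      apply RingOfIntegers.ext
      show algebraMap (𝓞 Lt) Lt (τπ ^ k) = algebraMap (𝓞 Lt) Lt (π' ^ k)
      rw [map_pow, map_pow]
      calc (algebraMap (𝓞 Lt) Lt τπ) ^ k
          = (σ.symm (algebraMap (𝓞 Lt) Lt π')) ^ k := rfl
        _ = σ.symm ((algebraMap (𝓞 Lt) Lt π') ^ k) := (map_pow σ.symm _ k).symm
        _ = σ.symm x0 := rfl
        _ = x0 := hsymm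
        _ = (algebraMap (𝓞 Lt) Lt π') ^ k := rfl
    have h5 : k * padicOrd w τπ = k * padicOrd w π' := by
      rw [← padicOrd_pow w hτne, ← padicOrd_pow w hπ'ne, hkey]
    have h6 : padicOrd w τπ = padicOrd w π' := Nat.eq_of_mul_eq_mul_left hk0 h5
    unfold normVal
    rw [h6]
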